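/- Theorem (tightness of Perturbed Smoothed GDA for optimization stationarity). Let ε ∈ (0,1) and ℓ, D_Y > 0, and consider the hard OS instance. Run Perturbed Smoothed GDA on it with parameters r_x > ℓ, r_y > 0, α > 0, β ∈ (0,1) and 0 < c < 1/(r_x + ℓ), and assume (A_3 + B_3·β)² ≥ 4ℓcβγ and 2ℓcγβ < A_3 + B_3·β (so that −1 < λ_3 < 0). Initialize y_0 := D_Y, x_0 := ((3D_Y + 2)/(ℓ·D_Y))·ε and z_0 := x_0/v_1, where v_1 := 2c·r_x/(A_3 − B_3·β + √((A_3 − B_3·β)² + 4c·r_x·β(1 − A_3))), and assume 0 < x_0 < 1 and 0 < z_0 < 1. Then for every T ∈ ℕ, if x_T is an ε-optimization-stationary point of min_{x∈ℝ} max_{y∈[0,D_Y]} f(x,y), then (1 + λ_3)^T ≤ 1/2. -/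

import Mathlib

noncomputable section

/-- The function `h` of the hard OS instance. -/
def hOS (l Dy : ℝ) (x : ℝ) : ℝ :=
  if |x| ≤ 1 then l / (2 * (Dy + 1)) * x ^ 2
  else if |x| < 2 then l / (Dy + 1) - l / (2 * (Dy + 1)) * (|x| - 2) ^ 2
  else l / (Dy + 1)

/-- The derivative of `hOS` in `x`. -/
def hOS' (l Dy : ℝ) (x : ℝ) : ℝ :=
  if |x| ≤ 1 then l / (Dy + 1) * x
  else if |x| < 2 then -(l / (Dy + 1)) * (|x| - 2) * Real.sign x
  else 0

/-- Metric projection of `v` onto the interval `[0, Dy]`. -/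
def projI (Dy v : ℝ) : ℝ := max 0 (min Dy v)

/-- Value function `Φ(z) = max_{y ∈ [0, Dy]} h(z)·y` of the hard OS instance. -/
def PhiOS (l Dy : ℝ) (z : ℝ) : ℝ :=
  sSup ((fun y => hOS l Dy z * y) '' Set.Icc (0 : ℝ) Dy)

/-- `x` is an `ε`-optimization-stationary point of the hard OS instance:
the minimizer `p` of `Φ(z) + ℓ(z − x)²` over `z ∈ ℝ` satisfies `|p − x| ≤ ε/(2ℓ)`. -/
def IsOS1 (l Dy ε x : ℝ) : Prop :=
  ∃ p : ℝ, (∀ z : ℝ, PhiOS l Dy p + l * (p - x) ^ 2 ≤ PhiOS l Dy z + l * (z - x) ^ 2) ∧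
    |p - x| ≤ ε / (2 * l)

/-- `A₃ = ℓcγ + c r_x`. -/
def A3 (l c rx γ : ℝ) : ℝ := l * c * γ + c * rx

/-- `B₃ = 1 − c r_x`. -/
def B3 (c rx : ℝ) : ℝ := 1 - c * rx

/-- `λ₃ = −(A₃ + B₃β)/2 + (1/2)·√((A₃ + B₃β)² − 4ℓcβγ)`. -/
def lam3 (l c rx γ β : ℝ) : ℝ :=
  -(A3 l c rx γ + B3 c rx * β) / 2 +
    Real.sqrt ((A3 l c rx γ + B3 c rx * β) ^ 2 - 4 * l * c * β * γ) / 2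

lemma hOS_nonneg (l Dy : ℝ) (hl : 0 < l) (hDy : 0 < Dy) (x : ℝ) : 0 ≤ hOS l Dy x := by
  unfold hOS
  have h1 : (0:ℝ) < Dy + 1 := by linarith
  have h2d : l / (Dy + 1) = 2 * (l / (2 * (Dy + 1))) := by field_simp
  have hld : 0 < l / (2 * (Dy + 1)) := by positivity
  split_ifs with h2 h3
  · positivity
  · push_neg at h2
    have : (|x| - 2)^2 ≤ 1 := by nlinarith [abs_nonneg x]
    nlinarith
  · positivity

lemma hOS_ge (l Dy : ℝ) (hl : 0 < l) (hDy : 0 < Dy) (x : ℝ) (hx : 1 ≤ |x|) :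
    l / (2 * (Dy + 1)) ≤ hOS l Dy x := by
  unfold hOS
  have h1 : (0:ℝ) < Dy + 1 := by linarith
  have h2d : l / (Dy + 1) = 2 * (l / (2 * (Dy + 1))) := by field_simp
  have hld : 0 < l / (2 * (Dy + 1)) := by positivity
  split_ifs with h2 h3
  · have hxx : |x| = 1 := le_antisymm h2 hx
    rw [show x^2 = |x|^2 by rw [sq_abs], hxx]
    simp
  · have : (|x| - 2)^2 ≤ 1 := by
      push_neg at h2
      nlinarith
    nlinarith
  · nlinarith

lemma PhiOS_eq (l Dy : ℝ) (hl : 0 < l) (hDy : 0 < Dy) (z : ℝ) :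
    PhiOS l Dy z = hOS l Dy z * Dy := by
  apply IsGreatest.csSup_eq
  constructor
  · exact ⟨Dy, ⟨le_of_lt hDy, le_refl Dy⟩, rfl⟩
  · rintro b ⟨y, ⟨hy0, hy1⟩, rfl⟩
    exact mul_le_mul_of_nonneg_left hy1 (hOS_nonneg l Dy hl hDy z)

set_option maxHeartbeats 2000000 in
/-- Tightness of Perturbed Smoothed GDA for optimization stationarity on the
hard OS instance, with `γ = D_Y/(D_Y + 1)`. -/
theorem psgda_os_tightness
    (l Dy ε ry rx α β c γ v1 : ℝ) (xs ys zs : ℕ → ℝ)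
    (hl : 0 < l) (hDy : 0 < Dy) (hε : 0 < ε) (hε1 : ε < 1)
    (hry : 0 < ry) (hrx : l < rx) (hα : 0 < α) (hβ : 0 < β) (hβ1 : β < 1)
    (hc : 0 < c) (hc1 : c < 1 / (rx + l))
    (hγ : γ = Dy / (Dy + 1))
    -- conditions ensuring −1 < λ₃ < 0
    (hdisc : (A3 l c rx γ + B3 c rx * β) ^ 2 ≥ 4 * l * c * β * γ)
    (hlam : 2 * l * c * γ * β < A3 l c rx γ + B3 c rx * β)
    -- v₁: first coordinate of the eigenvector of the frozen-dual recursion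
    (hv1 : v1 = 2 * c * rx / (A3 l c rx γ - B3 c rx * β +
      Real.sqrt ((A3 l c rx γ - B3 c rx * β) ^ 2 + 4 * c * rx * β * (1 - A3 l c rx γ))))
    -- initialization
    (hy0 : ys 0 = Dy)
    (hx0 : xs 0 = (3 * Dy + 2) / (l * Dy) * ε)
    (hz0 : zs 0 = xs 0 / v1)
    (hx0mem : 0 < xs 0 ∧ xs 0 < 1) (hz0mem : 0 < zs 0 ∧ zs 0 < 1)
    -- Perturbed Smoothed GDA iterations on F̃(x,y,z) = h(x)·y + (r_x/2)(x−z)² − (r_y/2)y²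
    (hxrec : ∀ t, xs (t + 1) = xs t - c * (hOS' l Dy (xs t) * ys t + rx * (xs t - zs t)))
    (hyrec : ∀ t, ys (t + 1) = projI Dy (ys t + α * (hOS l Dy (xs (t + 1)) - ry * ys t)))
    (hzrec : ∀ t, zs (t + 1) = zs t + β * (xs (t + 1) - zs t)) :
    ∀ T : ℕ, IsOS1 l Dy ε (xs T) →
      (1 + lam3 l c rx γ β) ^ T ≤ 1 / 2 := by
  obtain ⟨hx0pos, hx0lt1⟩ := hx0mem
  obtain ⟨hz0pos, hz0lt1⟩ := hz0mem
  have hDy1 : (0:ℝ) < Dy + 1 := by linarith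
  have hγpos : 0 < γ := by rw [hγ]; positivity
  have hγlt1 : γ < 1 := by rw [hγ, div_lt_one hDy1]; linarith
  have hrxl : 0 < rx + l := by linarith
  have hcc : c * (rx + l) < 1 := by
    have := (lt_div_iff₀ hrxl).1 hc1
    linarith
  have hcrx0 : 0 < c * rx := mul_pos hc (by linarith)
  have hcrx1 : c * rx < 1 := by linarith [mul_pos hc hl]
  have hA0 : 0 < l*c*γ + c*rx := by positivity
  have hA1 : l*c*γ + c*rx < 1 := by
    linarith [mul_pos (mul_pos hl hc) (by linarith : (0:ℝ) < 1 - γ)]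
  have hSlt2 : l*c*γ + c*rx + (1 - c*rx)*β < 2 := by
    linarith [mul_nonneg hcrx0.le hβ.le]
  have hDnn : 0 ≤ (l*c*γ + c*rx + (1 - c*rx)*β)^2 - 4*l*c*β*γ := by
    have h := hdisc; simp only [A3, B3] at h; linarith
  obtain ⟨sD, hsDdef⟩ : ∃ sD, Real.sqrt ((l*c*γ + c*rx + (1 - c*rx)*β)^2 - 4*l*c*β*γ) = sD :=
    ⟨_, rfl⟩
  have hsD0 : 0 ≤ sD := hsDdef ▸ Real.sqrt_nonneg _
  have hsDsq : sD^2 = (l*c*γ + c*rx + (1 - c*rx)*β)^2 - 4*l*c*β*γ := by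
    rw [← hsDdef]; exact Real.sq_sqrt hDnn
  set lam := lam3 l c rx γ β with hlamset
  have hlamd : lam = -(l*c*γ + c*rx + (1 - c*rx)*β)/2 + sD/2 := by
    rw [hlamset]; simp only [lam3, A3, B3, hsDdef]
  have hchar : lam^2 + (l*c*γ + c*rx + (1 - c*rx)*β)*lam + l*c*β*γ = 0 := by
    rw [hlamd]; linear_combination hsDsq/4
  have hμpos : 0 < 1 + lam := by rw [hlamd]; linarith
  have hdlt : (1 - c*rx)*β - (l*c*γ + c*rx) < sD := by
    have hident : (l*c*γ + c*rx + (1-c*rx)*β)^2 - 4*l*c*β*γ -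
        ((1 - c*rx)*β - (l*c*γ + c*rx))^2 = 4*(β*(c*rx)*(1 - (l*c*γ + c*rx))) := by
      ring
    have hprod : 0 < β*(c*rx)*(1 - (l*c*γ + c*rx)) :=
      mul_pos (mul_pos hβ hcrx0) (by linarith : (0:ℝ) < 1 - (l*c*γ + c*rx))
    have h1 : ((1 - c*rx)*β - (l*c*γ + c*rx))^2 <
        (l*c*γ + c*rx + (1-c*rx)*β)^2 - 4*l*c*β*γ := by
      linarith
    rcases le_or_gt ((1 - c*rx)*β - (l*c*γ + c*rx)) 0 with hle | hgt
    · have hD0 : 0 < (l*c*γ + c*rx + (1-c*rx)*β)^2 - 4*l*c*β*γ := by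
        linarith [sq_nonneg ((1 - c*rx)*β - (l*c*γ + c*rx))]
      have : 0 < sD := by rw [← hsDdef]; exact Real.sqrt_pos.2 hD0
      linarith
    · have := (Real.lt_sqrt hgt.le).2 h1
      rw [hsDdef] at this
      exact this
  have hden : 0 < l*c*γ + c*rx - (1 - c*rx)*β + sD := by linarith
  have hv1' : v1 = 2*c*rx / (l*c*γ + c*rx - (1 - c*rx)*β + sD) := by
    rw [hv1]; simp only [A3, B3]
    rw [show (l*c*γ + c*rx - (1 - c*rx)*β)^2 + 4*c*rx*β*(1 - (l*c*γ + c*rx))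
        = (l*c*γ + c*rx + (1 - c*rx)*β)^2 - 4*l*c*β*γ by ring, hsDdef]
  have hlamA : lam + (l*c*γ + c*rx) = (l*c*γ + c*rx - (1 - c*rx)*β + sD)/2 := by
    rw [hlamd]; ring
  have hlamApos : 0 < lam + (l*c*γ + c*rx) := by rw [hlamA]; linarith
  have hv1pos : 0 < v1 := by rw [hv1']; exact div_pos (by linarith) hden
  have hdne : l*c*γ + c*rx - (1 - c*rx)*β + sD ≠ 0 := ne_of_gt hden
  have hv1lam : v1 * (lam + (l*c*γ + c*rx)) = c*rx := by
    rw [hv1', hlamA, div_mul_div_comm, div_eq_iff (mul_ne_zero hdne two_ne_zero)]; ring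
  have hx0z0 : xs 0 = zs 0 * v1 := by rw [hz0]; field_simp
  have eig1 : (1 - (l*c*γ + c*rx))*xs 0 + c*rx*zs 0 = (1+lam)*xs 0 := by
    rw [hx0z0]; linear_combination (-(zs 0)) * hv1lam
  have h5 : β*(1+lam)*(c*rx) = (lam+β)*(lam + (l*c*γ + c*rx)) := by
    linear_combination (-1) * hchar
  have h6 : β*(1+lam)*v1 = lam + β := by
    apply mul_right_cancel₀ (ne_of_gt hlamApos)
    linear_combination β*(1+lam)*hv1lam + h5
  have eig2 : (1-β)*zs 0 + β*((1+lam)*xs 0) = (1+lam)*zs 0 := by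
    rw [hx0z0]; linear_combination (zs 0) * h6
  have hM0 : 0 ≤ max (xs 0) (zs 0) := le_trans hx0pos.le (le_max_left _ _)
  have hM1 : max (xs 0) (zs 0) < 1 := max_lt hx0lt1 hz0lt1
  have key : ∀ t, (0 ≤ xs t ∧ xs t ≤ max (xs 0) (zs 0)) ∧
      (0 ≤ zs t ∧ zs t ≤ max (xs 0) (zs 0)) ∧ (0 ≤ ys t ∧ ys t ≤ Dy) ∧
      xs 0 * (1+lam)^t ≤ xs t ∧ zs 0 * (1+lam)^t ≤ zs t := by
    intro t; induction t with
    | zero =>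
      refine ⟨⟨hx0pos.le, le_max_left _ _⟩, ⟨hz0pos.le, le_max_right _ _⟩,
        ⟨by rw [hy0]; exact hDy.le, by rw [hy0]⟩, by simp, by simp⟩
    | succ t ih =>
      obtain ⟨⟨hxt0, hxtM⟩, ⟨hzt0, hztM⟩, ⟨hyt0, hytD⟩, hxl, hzl⟩ := ih
      have hxtabs : |xs t| ≤ 1 := abs_le.2 ⟨by linarith, by linarith⟩
      have hder : hOS' l Dy (xs t) = l/(Dy+1) * xs t := by
        unfold hOS'; rw [if_pos hxtabs]
      have hxs1 : xs (t+1) = (1 - c*(l/(Dy+1))*ys t - c*rx)*xs t + c*rx*zs t := by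
        rw [hxrec t, hder]; ring
      have hK0 : 0 ≤ c*(l/(Dy+1))*ys t := by positivity
      have hKle : c*(l/(Dy+1))*ys t ≤ l*c*γ := by
        have he : c*(l/(Dy+1))*Dy = l*c*γ := by rw [hγ]; ring
        calc c*(l/(Dy+1))*ys t ≤ c*(l/(Dy+1))*Dy :=
              mul_le_mul_of_nonneg_left hytD (by positivity)
          _ = l*c*γ := he
      have ha0 : 0 ≤ 1 - c*(l/(Dy+1))*ys t - c*rx := by linarith
      have hx10 : 0 ≤ xs (t+1) := by
        rw [hxs1]
        exact add_nonneg (mul_nonneg ha0 hxt0) (mul_nonneg hcrx0.le hzt0)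
      have hx1M : xs (t+1) ≤ max (xs 0) (zs 0) := by
        rw [hxs1]
        linarith [mul_le_mul_of_nonneg_left hxtM ha0,
          mul_le_mul_of_nonneg_left hztM hcrx0.le, mul_nonneg hK0 hM0]
      have hx1low : xs 0 * (1+lam)^(t+1) ≤ xs (t+1) := by
        have e2 : (1 - (l*c*γ + c*rx))*(xs 0*(1+lam)^t) ≤ (1 - (l*c*γ + c*rx))*xs t :=
          mul_le_mul_of_nonneg_left hxl (by linarith)
        have e1 : (1 - (l*c*γ + c*rx))*xs t ≤ (1 - c*(l/(Dy+1))*ys t - c*rx)*xs t :=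
          mul_le_mul_of_nonneg_right (by linarith) hxt0
        have e3 : c*rx*(zs 0*(1+lam)^t) ≤ c*rx*zs t :=
          mul_le_mul_of_nonneg_left hzl hcrx0.le
        have e4 : (1 - (l*c*γ + c*rx))*(xs 0*(1+lam)^t) + c*rx*(zs 0*(1+lam)^t)
            = xs 0*(1+lam)^(t+1) := by
          rw [pow_succ]; linear_combination ((1+lam)^t) * eig1
        rw [hxs1]; linarith
      have hzs1 : zs (t+1) = (1-β)*zs t + β*xs (t+1) := by rw [hzrec t]; ring
      have hz10 : 0 ≤ zs (t+1) := by
        rw [hzs1]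
        exact add_nonneg (mul_nonneg (by linarith) hzt0) (mul_nonneg hβ.le hx10)
      have hz1M : zs (t+1) ≤ max (xs 0) (zs 0) := by
        rw [hzs1]
        linarith [mul_le_mul_of_nonneg_left hztM (by linarith : (0:ℝ) ≤ 1-β),
          mul_le_mul_of_nonneg_left hx1M hβ.le]
      have hz1low : zs 0*(1+lam)^(t+1) ≤ zs (t+1) := by
        have e5 : (1-β)*(zs 0*(1+lam)^t) ≤ (1-β)*zs t :=
          mul_le_mul_of_nonneg_left hzl (by linarith)
        have e6 : β*(xs 0*(1+lam)^(t+1)) ≤ β*xs (t+1) :=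
          mul_le_mul_of_nonneg_left hx1low hβ.le
        have e7 : (1-β)*(zs 0*(1+lam)^t) + β*(xs 0*(1+lam)^(t+1)) = zs 0*(1+lam)^(t+1) := by
          rw [pow_succ]; linear_combination ((1+lam)^t) * eig2
        rw [hzs1]; linarith
      have hy1 : 0 ≤ ys (t+1) ∧ ys (t+1) ≤ Dy := by
        rw [hyrec t]; unfold projI
        exact ⟨le_max_left _ _, max_le hDy.le (min_le_left _ _)⟩
      exact ⟨⟨hx10, hx1M⟩, ⟨hz10, hz1M⟩, hy1, hx1low, hz1low⟩
  intro T hT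
  obtain ⟨p, hpmin, hpnear⟩ := hT
  obtain ⟨⟨hxT0, hxTM⟩, -, -, hxTlow, -⟩ := key T
  have hμT : 0 < (1+lam)^T := pow_pos hμpos T
  have hxTpos : 0 < xs T := lt_of_lt_of_le (mul_pos hx0pos hμT) hxTlow
  have hxT1 : xs T < 1 := lt_of_le_of_lt hxTM hM1
  have hεl : 3*ε < l := by
    have h1 := hx0lt1
    rw [hx0, div_mul_eq_mul_div, div_lt_one (by positivity)] at h1
    by_contra hcon
    push_neg at hcon
    have := mul_le_mul_of_nonneg_right hcon hDy.le
    linarith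
  have hE : ε/(2*l) < 1/6 := by
    rw [div_lt_div_iff₀ (by linarith) (by norm_num)]; linarith
  have hpxlo : xs T - ε/(2*l) ≤ p := by
    have h := abs_le.1 hpnear; linarith [h.1]
  have hpgt : -1 ≤ p := by linarith
  set q := 2*xs T/(γ+2) with hq
  have hqd : q*(γ+2) = 2*xs T := by rw [hq]; field_simp
  have hq0 : 0 ≤ q := by rw [hq]; positivity
  have hqlex : q ≤ xs T := by
    rw [hq, div_le_iff₀ (by linarith)]; linarith [mul_pos hγpos hxTpos]
  have hq1 : q < 1 := lt_of_le_of_lt hqlex hxT1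
  have hPhival : ∀ z, |z| ≤ 1 → PhiOS l Dy z = l*γ/2*z^2 := by
    intro z hz
    rw [PhiOS_eq l Dy hl hDy z]
    unfold hOS; rw [if_pos hz, hγ]; field_simp
  have hPq : PhiOS l Dy q = l*γ/2*q^2 :=
    hPhival q (abs_le.2 ⟨by linarith, by linarith⟩)
  have hmin := hpmin q
  rw [hPq] at hmin
  have hp1 : p ≤ 1 := by
    by_contra hpc; push_neg at hpc
    have hPhip : l*γ/2 ≤ PhiOS l Dy p := by
      rw [PhiOS_eq l Dy hl hDy p]
      have h7 := hOS_ge l Dy hl hDy p (by rw [abs_of_pos (by linarith)]; linarith)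
      have h8 : l/(2*(Dy+1))*Dy = l*γ/2 := by rw [hγ]; field_simp
      calc l*γ/2 = l/(2*(Dy+1))*Dy := h8.symm
        _ ≤ hOS l Dy p * Dy := mul_le_mul_of_nonneg_right h7 hDy.le
    have hsq : l*(1-xs T)^2 ≤ l*(p-xs T)^2 := by
      apply mul_le_mul_of_nonneg_left _ hl.le
      linarith [mul_pos (by linarith : (0:ℝ) < p - 1)
        (by linarith : (0:ℝ) < p + 1 - 2*xs T)]
    have hid : l*γ/2 + l*(1-xs T)^2 - (l*γ/2*q^2 + l*(q-xs T)^2)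
        = (l*γ/2+l)*(1-q)^2 := by
      linear_combination ((1-q)*l)*hqd
    have hposq : 0 < (l*γ/2+l)*(1-q)^2 :=
      mul_pos (by positivity) (pow_pos (by linarith) 2)
    linarith
  have habsp : |p| ≤ 1 := abs_le.2 ⟨hpgt, hp1⟩
  have hPp : PhiOS l Dy p = l*γ/2*p^2 := hPhival p habsp
  rw [hPp] at hmin
  have hid2 : l*γ/2*p^2 + l*(p-xs T)^2 - (l*γ/2*q^2 + l*(q-xs T)^2)
      = (l*γ/2+l)*(p-q)^2 := by
    linear_combination ((p-q)*l)*hqd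
  have hco : 0 < l*γ/2 + l := by positivity
  have h10 : (p-q)^2 ≤ 0 := by
    by_contra hcon
    push_neg at hcon
    linarith [mul_pos hco hcon]
  have h11 : (p - q)^2 = 0 := le_antisymm h10 (sq_nonneg _)
  have hpq : p = q := by
    have := pow_eq_zero_iff (n := 2) (by norm_num) |>.1 h11
    linarith
  have hqnear : xs T - q ≤ ε/(2*l) := by
    have h := abs_le.1 hpnear
    rw [hpq] at h
    linarith [h.1]
  have hxq : (xs T - q)*(γ+2) = γ*xs T := by rw [hq]; field_simp; ring
  have h12 : γ*xs T ≤ ε/(2*l)*(γ+2) := by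
    rw [← hxq]; exact mul_le_mul_of_nonneg_right hqnear (by linarith)
  have h13 : 2*l*γ*xs T ≤ ε*(γ+2) := by
    rw [show ε/(2*l)*(γ+2) = ε*(γ+2)/(2*l) by ring, le_div_iff₀ (by linarith)] at h12
    linarith
  have hγDy : γ*(Dy+1) = Dy := by rw [hγ]; field_simp
  have hx0'' : xs 0 * (l*Dy) = (3*Dy+2)*ε := by rw [hx0]; field_simp
  have hx0lγ : xs 0 * (l*γ) = (γ+2)*ε := by
    apply mul_right_cancel₀ (ne_of_gt hDy1)
    linear_combination hx0'' + (xs 0*l - ε)*hγDy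
  have hxhalf : xs T ≤ xs 0 / 2 := by
    have h14' : (2*xs T)*(l*γ) ≤ xs 0*(l*γ) := by
      rw [hx0lγ]; linarith
    have h15 := le_of_mul_le_mul_right h14' (by positivity : 0 < l*γ)
    linarith
  have h14 : xs 0 * (1+lam)^T ≤ xs 0 * (1/2) := by
    have := le_trans hxTlow hxhalf; linarith
  exact le_of_mul_le_mul_left h14 hx0pos
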